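/- Let G be a connected graph, let {e1, e2} be a 2-edge-cut of G with e1 ≠ e2, and suppose that {e1, f1, f2} is a 3-edge-cut of G with e2 ∉ {f1, f2}. Then {e2, f1, f2} is a 3-edge-cut of G as well. -/
import Mathlib


open SimpleGraph

/-- A graph is cubic if every vertex has degree `3`. -/
def IsCubic {V : Type*} (G : SimpleGraph V) : Prop :=
  ∀ v : V, (G.neighborSet v).ncard = 3

/-- A graph is bridgeless if it has no bridge. -/
def Bridgeless {V : Type*} (G : SimpleGraph V) : Prop :=
  ∀ e : Sym2 V, ¬ G.IsBridge e

/-- `S` is a set of edges of `G` whose deletion disconnects `G`. -/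
def IsDisconnectingSet {V : Type*} (G : SimpleGraph V) (S : Set (Sym2 V)) : Prop :=
  S ⊆ G.edgeSet ∧ ¬ (G.deleteEdges S).Connected

/-- A `k`-edge-cut: an inclusion-minimal set of `k` edges whose deletion disconnects `G`. -/
def IsKEdgeCut {V : Type*} (G : SimpleGraph V) (k : ℕ) (S : Set (Sym2 V)) : Prop :=
  S.ncard = k ∧ IsDisconnectingSet G S ∧ ∀ T : Set (Sym2 V), T ⊂ S → ¬ IsDisconnectingSet G T

/-- A perfect matching of `G`, as a set of edges such that every vertex is incident with
exactly one edge of the set. -/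
def IsPerfectMatchingSet {V : Type*} (G : SimpleGraph V) (M : Set (Sym2 V)) : Prop :=
  M ⊆ G.edgeSet ∧ ∀ v : V, ∃! e : Sym2 V, e ∈ M ∧ v ∈ e

/-- A well-spread perfect matching: a perfect matching containing exactly one edge of every
`3`-edge-cut. -/
def IsWellSpreadPM {V : Type*} (G : SimpleGraph V) (M : Set (Sym2 V)) : Prop :=
  IsPerfectMatchingSet G M ∧ ∀ C : Set (Sym2 V), IsKEdgeCut G 3 C → (M ∩ C).ncard = 1

/-- A graph is `3`-edge-connected if it is connected, has at least two vertices, and stays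
connected after deleting any set of fewer than `3` edges. -/
def ThreeEdgeConnected {V : Type*} [Fintype V] (G : SimpleGraph V) : Prop :=
  G.Connected ∧ 1 < Fintype.card V ∧
    ∀ S : Set (Sym2 V), S.ncard < 3 → (G.deleteEdges S).Connected

section EB

variable {V : Type*} {G : SimpleGraph V}

/-- The edge boundary of a vertex set. -/
def EB (G : SimpleGraph V) (X : Set V) : Set (Sym2 V) :=
  {e | e ∈ G.edgeSet ∧ ∃ u v, e = s(u, v) ∧ u ∈ X ∧ v ∉ X}

lemma mem_EB {X : Set V} {a b : V} :
    s(a, b) ∈ EB G X ↔ G.Adj a b ∧ ((a ∈ X ∧ b ∉ X) ∨ (b ∈ X ∧ a ∉ X)) := by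
  constructor
  · rintro ⟨he, u, v, huv, hu, hv⟩
    rw [Sym2.eq_iff] at huv
    rcases huv with ⟨rfl, rfl⟩ | ⟨rfl, rfl⟩
    · exact ⟨(G.mem_edgeSet).mp he, Or.inl ⟨hu, hv⟩⟩
    · exact ⟨(G.mem_edgeSet).mp he, Or.inr ⟨hu, hv⟩⟩
  · rintro ⟨he, ⟨hu, hv⟩ | ⟨hu, hv⟩⟩
    · exact ⟨(G.mem_edgeSet).mpr he, a, b, rfl, hu, hv⟩
    · exact ⟨(G.mem_edgeSet).mpr he, b, a, Sym2.eq_swap, hu, hv⟩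

lemma EB_subset {X : Set V} : EB G X ⊆ G.edgeSet := fun _ he => he.1

lemma EB_symmDiff {X Y : Set V} :
    EB G (symmDiff X Y) = symmDiff (EB G X) (EB G Y) := by
  ext e
  induction e using Sym2.ind with
  | _ a b =>
    simp only [Set.mem_symmDiff, mem_EB]
    tauto

lemma EB_sides {X : Set V} {e : Sym2 V} (he : e ∈ EB G X) :
    X.Nonempty ∧ Xᶜ.Nonempty := by
  obtain ⟨_, u, v, _, hu, hv⟩ := he
  exact ⟨⟨u, hu⟩, ⟨v, hv⟩⟩

lemma walk_stay {X : Set V} :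
    ∀ {x y : V}, (G.deleteEdges (EB G X)).Walk x y → x ∈ X → y ∈ X
  | _, _, SimpleGraph.Walk.nil, hx => hx
  | _, _, SimpleGraph.Walk.cons h p, hx => by
    rw [SimpleGraph.deleteEdges_adj] at h
    exact walk_stay p (by
      by_contra hb
      exact h.2 (mem_EB.mpr ⟨h.1, Or.inl ⟨hx, hb⟩⟩))

lemma EB_disconnects {X : Set V} (hX : X.Nonempty) (hXc : Xᶜ.Nonempty) :
    ¬ (G.deleteEdges (EB G X)).Connected := by
  obtain ⟨x, hx⟩ := hX
  obtain ⟨y, hy⟩ := hXc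
  intro h
  exact hy (walk_stay (h.preconnected x y).some hx)

lemma EB_dis {X : Set V} (hX : X.Nonempty) (hXc : Xᶜ.Nonempty) :
    IsDisconnectingSet G (EB G X) := ⟨EB_subset, EB_disconnects hX hXc⟩

lemma exists_EB_subset (hconn : G.Connected) {S : Set (Sym2 V)}
    (hd : ¬ (G.deleteEdges S).Connected) :
    ∃ X : Set V, EB G X ⊆ S ∧ X.Nonempty ∧ Xᶜ.Nonempty := by
  have hV : Nonempty V := hconn.nonempty
  have hpre : ¬ (G.deleteEdges S).Preconnected := fun h => hd ⟨h⟩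
  simp only [SimpleGraph.Preconnected, not_forall] at hpre
  obtain ⟨x, y, hxy⟩ := hpre
  refine ⟨{u | (G.deleteEdges S).Reachable x u}, ?_, ⟨x, Reachable.refl x⟩, ⟨y, hxy⟩⟩
  rintro e ⟨he, u, v, rfl, hu, hv⟩
  by_contra hes
  have hadj : (G.deleteEdges S).Adj u v :=
    SimpleGraph.deleteEdges_adj.mpr ⟨(G.mem_edgeSet).mp he, hes⟩
  exact hv (hu.trans hadj.reachable)

lemma cut_boundary (hconn : G.Connected) {S : Set (Sym2 V)} {k : ℕ}
    (hcut : IsKEdgeCut G k S) :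
    ∃ X : Set V, EB G X = S ∧ X.Nonempty ∧ Xᶜ.Nonempty := by
  obtain ⟨hk, ⟨hS, hd⟩, hmin⟩ := hcut
  obtain ⟨X, hsub, hX, hXc⟩ := exists_EB_subset hconn hd
  refine ⟨X, ?_, hX, hXc⟩
  by_contra hne
  exact hmin _ (hsub.ssubset_of_ne hne) (EB_dis hX hXc)

lemma symmDiff_calc3 {α : Type*} (a b c d : α) (h1 : a ≠ b) (h2 : a ≠ c) (h3 : a ≠ d)
    (h4 : b ≠ c) (h5 : b ≠ d) :
    symmDiff ({a, b} : Set α) {a, c, d} = {b, c, d} := by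
  ext x
  simp only [Set.mem_symmDiff, Set.mem_insert_iff, Set.mem_singleton_iff]
  constructor
  · rintro (⟨rfl | rfl, h⟩ | ⟨rfl | rfl | rfl, h⟩) <;> tauto
  · rintro (rfl | rfl | rfl) <;> tauto

lemma symmDiff_calc2 {α : Type*} (a b c : α) (h1 : a ≠ b) (h2 : a ≠ c) (h3 : b ≠ c) :
    symmDiff ({b, c} : Set α) {a, b} = {a, c} := by
  ext x
  simp only [Set.mem_symmDiff, Set.mem_insert_iff, Set.mem_singleton_iff]
  constructor
  · rintro (⟨rfl | rfl, h⟩ | ⟨rfl | rfl, h⟩) <;> tauto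
  · rintro (rfl | rfl) <;> tauto

lemma ex_aux {e1 e2 f : Sym2 V} (h12 : e1 ≠ e2) (h1f : e1 ≠ f) (h2f : e2 ≠ f)
    {X X2 : Set V} (hX : EB G X = {e2, f}) (hX2 : EB G X2 = {e1, e2}) :
    IsDisconnectingSet G {e1, f} := by
  have key : EB G (symmDiff X X2) = {e1, f} := by
    rw [EB_symmDiff, hX, hX2, symmDiff_calc2 e1 e2 f h12 h1f h2f]
  have he1 : e1 ∈ EB G (symmDiff X X2) := by
    rw [key]; exact Set.mem_insert _ _
  obtain ⟨hne, hnec⟩ := EB_sides he1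
  rw [← key]
  exact EB_dis hne hnec

lemma pair_ncard_le {α : Type*} (a b : α) : ({a, b} : Set α).ncard ≤ 2 := by
  refine le_trans (Set.ncard_insert_le _ _) ?_
  simp [Set.ncard_singleton]

end EB

/-- If `{e1, e2}` is a `2`-edge-cut and `{e1, f1, f2}` is a `3`-edge-cut with
`e2 ∉ {f1, f2}`, then `{e2, f1, f2}` is a `3`-edge-cut. -/
theorem three_edge_cut_exchange {V : Type*} [Fintype V] (G : SimpleGraph V)
    (hconn : G.Connected)
    (e1 e2 f1 f2 : Sym2 V) (hne : e1 ≠ e2)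
    (hcut2 : IsKEdgeCut G 2 {e1, e2})
    (he2 : e2 ∉ ({f1, f2} : Set (Sym2 V)))
    (hcut3 : IsKEdgeCut G 3 {e1, f1, f2}) :
    IsKEdgeCut G 3 {e2, f1, f2} := by
  -- distinctness facts
  have he2f1 : e2 ≠ f1 := fun h => he2 (by simp [h])
  have he2f2 : e2 ≠ f2 := fun h => he2 (by simp [h])
  have hc3 := hcut3.1
  have hf12 : f1 ≠ f2 := by
    rintro rfl
    have h : ({e1, f1, f1} : Set (Sym2 V)) = {e1, f1} := by simp
    rw [h] at hc3
    have := pair_ncard_le e1 f1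
    omega
  have he1f1 : e1 ≠ f1 := by
    rintro rfl
    have h : ({e1, e1, f2} : Set (Sym2 V)) = {e1, f2} := by simp
    rw [h] at hc3
    have := pair_ncard_le e1 f2
    omega
  have he1f2 : e1 ≠ f2 := by
    rintro rfl
    have h : ({e1, f1, e1} : Set (Sym2 V)) = {e1, f1} := by
      ext x; simp; tauto
    rw [h] at hc3
    have := pair_ncard_le e1 f1
    omega
  -- boundaries of the two given cuts
  obtain ⟨X2, hX2, _, _⟩ := cut_boundary hconn hcut2
  obtain ⟨Y, hY, _, _⟩ := cut_boundary hconn hcut3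
  -- edge membership facts
  have hsub23 : ({e2, f1, f2} : Set (Sym2 V)) ⊆ G.edgeSet := by
    intro x hx
    simp only [Set.mem_insert_iff, Set.mem_singleton_iff] at hx
    rcases hx with rfl | rfl | rfl
    · exact hcut2.2.1.1 (by simp)
    · exact hcut3.2.1.1 (by simp)
    · exact hcut3.2.1.1 (by simp)
  refine ⟨?_, ?_, ?_⟩
  · exact Set.ncard_eq_three.mpr ⟨e2, f1, f2, he2f1, he2f2, hf12, rfl⟩
  · -- disconnecting
    have key : EB G (symmDiff X2 Y) = {e2, f1, f2} := by
      rw [EB_symmDiff, hX2, hY, symmDiff_calc3 e1 e2 f1 f2 hne he1f1 he1f2 he2f1 he2f2]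
    have he2m : e2 ∈ EB G (symmDiff X2 Y) := by
      rw [key]; exact Set.mem_insert _ _
    obtain ⟨hZ, hZc⟩ := EB_sides he2m
    refine ⟨hsub23, ?_⟩
    rw [← key]
    exact EB_disconnects hZ hZc
  · -- minimality
    intro T hT hTd
    obtain ⟨X, hsubT, hX, hXc⟩ := exists_EB_subset hconn hTd.2
    have hBsub : EB G X ⊆ {e2, f1, f2} := hsubT.trans hT.subset
    have hBdis : IsDisconnectingSet G (EB G X) := EB_dis hX hXc
    by_cases h2 : e2 ∈ EB G X
    · by_cases hb1 : f1 ∈ EB G X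
      · by_cases hb2 : f2 ∈ EB G X
        · -- all three in B ⊆ T, contradicting T ⊂ {e2,f1,f2}
          refine hT.not_subset ?_
          intro x hx
          simp only [Set.mem_insert_iff, Set.mem_singleton_iff] at hx
          rcases hx with rfl | rfl | rfl
          · exact hsubT h2
          · exact hsubT hb1
          · exact hsubT hb2
        · -- B = {e2, f1}
          have hBeq : EB G X = {e2, f1} := by
            apply subset_antisymm
            · intro x hx
              have hx3 := hBsub hx
              simp only [Set.mem_insert_iff, Set.mem_singleton_iff] at hx3 ⊢
              rcases hx3 with rfl | rfl | rfl
              · exact Or.inl rfl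
              · exact Or.inr rfl
              · exact absurd hx hb2
            · intro x hx
              simp only [Set.mem_insert_iff, Set.mem_singleton_iff] at hx
              rcases hx with rfl | rfl
              · exact h2
              · exact hb1
          have hdis : IsDisconnectingSet G {e1, f1} := ex_aux hne he1f1 he2f1 hBeq hX2
          refine hcut3.2.2 {e1, f1} ?_ hdis
          refine HasSubset.Subset.ssubset_of_ne ?_ ?_
          · intro x hx
            simp only [Set.mem_insert_iff, Set.mem_singleton_iff] at hx ⊢
            tauto
          · intro h
            have : f2 ∈ ({e1, f1} : Set (Sym2 V)) := by rw [h]; simp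
            simp only [Set.mem_insert_iff, Set.mem_singleton_iff] at this
            rcases this with h' | h'
            · exact he1f2 h'.symm
            · exact hf12 h'.symm
      · by_cases hb2 : f2 ∈ EB G X
        · -- B = {e2, f2}
          have hBeq : EB G X = {e2, f2} := by
            apply subset_antisymm
            · intro x hx
              have hx3 := hBsub hx
              simp only [Set.mem_insert_iff, Set.mem_singleton_iff] at hx3 ⊢
              rcases hx3 with rfl | rfl | rfl
              · exact Or.inl rfl
              · exact absurd hx hb1
              · exact Or.inr rfl
            · intro x hx
              simp only [Set.mem_insert_iff, Set.mem_singleton_iff] at hx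
              rcases hx with rfl | rfl
              · exact h2
              · exact hb2
          have hdis : IsDisconnectingSet G {e1, f2} := ex_aux hne he1f2 he2f2 hBeq hX2
          refine hcut3.2.2 {e1, f2} ?_ hdis
          refine HasSubset.Subset.ssubset_of_ne ?_ ?_
          · intro x hx
            simp only [Set.mem_insert_iff, Set.mem_singleton_iff] at hx ⊢
            tauto
          · intro h
            have : f1 ∈ ({e1, f2} : Set (Sym2 V)) := by rw [h]; simp
            simp only [Set.mem_insert_iff, Set.mem_singleton_iff] at this
            rcases this with h' | h'
            · exact he1f1 h'.symm
            · exact hf12 h'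
        · -- B ⊆ {e2} ⊂ {e1, e2}
          refine hcut2.2.2 (EB G X) ?_ hBdis
          refine HasSubset.Subset.ssubset_of_ne ?_ ?_
          · intro x hx
            have hx3 := hBsub hx
            simp only [Set.mem_insert_iff, Set.mem_singleton_iff] at hx3 ⊢
            rcases hx3 with rfl | rfl | rfl
            · exact Or.inr rfl
            · exact absurd hx hb1
            · exact absurd hx hb2
          · intro h
            have : e1 ∈ EB G X := by rw [h]; simp
            have := hBsub this
            simp only [Set.mem_insert_iff, Set.mem_singleton_iff] at this
            rcases this with h' | h' | h'
            · exact hne h'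
            · exact he1f1 h'
            · exact he1f2 h'
    · -- B ⊆ {f1, f2} ⊂ {e1, f1, f2}
      refine hcut3.2.2 (EB G X) ?_ hBdis
      refine HasSubset.Subset.ssubset_of_ne ?_ ?_
      · intro x hx
        have hx3 := hBsub hx
        simp only [Set.mem_insert_iff, Set.mem_singleton_iff] at hx3 ⊢
        rcases hx3 with rfl | rfl | rfl
        · exact absurd hx h2
        · exact Or.inr (Or.inl rfl)
        · exact Or.inr (Or.inr rfl)
      · intro h
        have he1m : e1 ∈ EB G X := by rw [h]; simp
        have := hBsub he1m
        simp only [Set.mem_insert_iff, Set.mem_singleton_iff] at this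
        rcases this with h' | h' | h'
        · exact hne h'
        · exact he1f1 h'
        · exact he1f2 h'
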